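/- Let P be a convex polytope in ℝ^D with vertices in ℤ^D, let n ∈ ℕ, let r > 0, and fix a fringe set F_r ⊆ B_r(nP) such that exactly l points of B_r(nP) are absent from F_r. Let k ∈ M_r(nP−nP). Then among all subsets S ⊆ L(nP) satisfying S ∩ B_r(nP) = F_r, the proportion of those with k ∉ S−S is at most (3/4)^{|L(nP ∩ (nP − k))|/2 − l}. -/

import Mathlib

open scoped Pointwise

noncomputable section

/-- Points of `ℝ^D` with the Euclidean metric. -/
abbrev Pt (D : ℕ) := EuclideanSpace ℝ (Fin D)

/-- `L(S)`: the set of lattice points of `S`, i.e. points of `S` all of whose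
coordinates are integers. -/
def latticePts {D : ℕ} (S : Set (Pt D)) : Set (Pt D) :=
  {x | x ∈ S ∧ ∀ i, ∃ z : ℤ, x i = (z : ℝ)}

/-- A convex polytope: the convex hull of a finite set of points. -/
def IsPolytope {D : ℕ} (P : Set (Pt D)) : Prop :=
  ∃ V : Set (Pt D), V.Finite ∧ P = convexHull ℝ V

/-- A convex polytope whose vertices (extreme points) all lie in `ℤ^D`. -/
def IsLatticePolytope {D : ℕ} (P : Set (Pt D)) : Prop :=
  IsPolytope P ∧ ∀ v ∈ Set.extremePoints ℝ P, ∀ i, ∃ z : ℤ, v i = (z : ℝ)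

/-- `u` and `v` are strictly antipodal vertices of `Q`: there are parallel supporting
hyperplanes `H₁, H₂` of `Q` (with common normal functional `f`) such that
`H₁ ∩ Q = {u}` and `H₂ ∩ Q = {v}`. -/
def StrictlyAntipodal {D : ℕ} (Q : Set (Pt D)) (u v : Pt D) : Prop :=
  ∃ f : Pt D →ₗ[ℝ] ℝ, f ≠ 0 ∧
    {x | x ∈ Q ∧ ∀ y ∈ Q, f y ≤ f x} = {u} ∧
    {x | x ∈ Q ∧ ∀ y ∈ Q, f x ≤ f y} = {v}

/-- The supporting cone of `Q` at `v`: `v + ⋃_{λ ≥ 0} λ (Q - v)`. -/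
def suppCone {D : ℕ} (Q : Set (Pt D)) (v : Pt D) : Set (Pt D) :=
  {v} + ⋃ (l : ℝ) (_ : 0 ≤ l), l • (Q - ({v} : Set (Pt D)))

/-- `Q` is locally point symmetric: its vertices can be partitioned into pairs
(given by a fixed-point-free involution `σ` of the vertex set) of strictly antipodal
vertices such that each pair `{u, v}` satisfies `C(u) - u = v - C(v)`. -/
def LocallyPointSymmetric {D : ℕ} (Q : Set (Pt D)) : Prop :=
  ∃ σ : Pt D → Pt D, ∀ v ∈ Set.extremePoints ℝ Q,
    σ v ∈ Set.extremePoints ℝ Q ∧ σ v ≠ v ∧ σ (σ v) = v ∧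
    StrictlyAntipodal Q v (σ v) ∧
    suppCone Q v - ({v} : Set (Pt D)) = ({σ v} : Set (Pt D)) - suppCone Q (σ v)

/-- `E` is an edge of `Q`: a 1-dimensional face, i.e. the intersection of `Q` with a
supporting hyperplane which is 1-dimensional. -/
def IsEdge {D : ℕ} (Q E : Set (Pt D)) : Prop :=
  (∃ f : Pt D →ₗ[ℝ] ℝ, f ≠ 0 ∧ E = {x | x ∈ Q ∧ ∀ y ∈ Q, f y ≤ f x}) ∧
    Module.finrank ℝ (affineSpan ℝ E).direction = 1

/-- `B_r(Q)`: lattice points of `Q` within distance `r` of some vertex of `Q`. -/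
def ballFringe {D : ℕ} (Q : Set (Pt D)) (r : ℝ) : Set (Pt D) :=
  {q | q ∈ latticePts Q ∧ ∃ v ∈ Set.extremePoints ℝ Q, dist q v ≤ r}

/-- `M_r(Q) = L(Q) \ B_r(Q)`: the middle lattice points of `Q`. -/
def middlePts {D : ℕ} (Q : Set (Pt D)) (r : ℝ) : Set (Pt D) :=
  latticePts Q \ ballFringe Q r

/-- `P` is point symmetric: `P = x - P` for some point `x`. -/
def PointSymmetric {D : ℕ} (P : Set (Pt D)) : Prop :=
  ∃ x : Pt D, P = ({x} : Set (Pt D)) - P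

section Aux

open scoped Pointwise

lemma coord_le_norm {D : ℕ} (x : Pt D) (i : Fin D) : |x i| ≤ ‖x‖ := by
  rw [EuclideanSpace.norm_eq]
  rw [Real.le_sqrt (abs_nonneg _)]
  have : |x i| ^ 2 ≤ ∑ j, ‖x j‖ ^ 2 := by
    rw [← Real.norm_eq_abs]
    exact Finset.single_le_sum (f := fun j => ‖x j‖ ^ 2) (fun j _ => sq_nonneg _)
      (Finset.mem_univ i)
  exact this
  positivity

lemma latticePts_finite {D : ℕ} {S : Set (Pt D)} (h : Bornology.IsBounded S) :
    (latticePts S).Finite := by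
  obtain ⟨R, hR⟩ := h.subset_closedBall 0
  set f : Pt D → (Fin D → ℤ) := fun x i => round (x i) with hf
  have hinj : Set.InjOn f (latticePts S) := by
    intro x hx y hy hxy
    ext i
    obtain ⟨zx, hzx⟩ := hx.2 i
    obtain ⟨zy, hzy⟩ := hy.2 i
    have : round (x i) = round (y i) := congrFun hxy i
    rw [hzx, hzy, round_intCast, round_intCast] at this
    rw [hzx, hzy, this]
  have himg : f '' latticePts S ⊆ {g : Fin D → ℤ | ∀ i, g i ∈ Set.Icc (-⌈R⌉ : ℤ) ⌈R⌉} := by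
    rintro g ⟨x, hx, rfl⟩ i
    obtain ⟨z, hz⟩ := hx.2 i
    have hxn : ‖x‖ ≤ R := by
      have := hR hx.1
      simpa [Metric.mem_closedBall] using this
    have h1 : |x i| ≤ R := (coord_le_norm x i).trans hxn
    have h2 : |(z : ℝ)| ≤ (⌈R⌉ : ℝ) := by
      rw [← hz]; exact h1.trans (Int.le_ceil R)
    rw [← Int.cast_abs, Int.cast_le] at h2
    have h3 := abs_le.mp h2
    simp only [hf, hz, round_intCast, Set.mem_Icc]
    exact h3
  have hfin : ({g : Fin D → ℤ | ∀ i, g i ∈ Set.Icc (-⌈R⌉ : ℤ) ⌈R⌉}).Finite := by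
    have : {g : Fin D → ℤ | ∀ i, g i ∈ Set.Icc (-⌈R⌉ : ℤ) ⌈R⌉} =
        Set.pi Set.univ (fun _ => (Set.Icc (-⌈R⌉ : ℤ) ⌈R⌉ : Set ℤ)) := by
      ext g
      simp only [Set.mem_pi, Set.mem_setOf_eq, Set.mem_univ, forall_true_left, Set.mem_Icc]
    rw [this]
    exact Set.Finite.pi (fun _ => Set.finite_Icc _ _)
  exact Set.Finite.of_finite_image ((hfin.subset himg)) hinj

open Finset in
lemma count_lemma {α : Type*} [DecidableEq α] (𝒞 : Finset (Finset α)) :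
    ∀ M : Finset α, (∀ C ∈ 𝒞, C.Nonempty ∧ C.card ≤ 2 ∧ C ⊆ M) →
    ((𝒞 : Set (Finset α)).Pairwise fun C C' => Disjoint C C') →
    ((M.powerset.filter (fun t => ∀ C ∈ 𝒞, ¬ C ⊆ t)).card) * 4 ^ 𝒞.card ≤
      3 ^ 𝒞.card * 2 ^ M.card := by
  induction 𝒞 using Finset.induction_on with
  | empty =>
    intro M _ _
    simpa using Finset.card_le_card (Finset.filter_subset _ M.powerset) |>.trans
      (le_of_eq (Finset.card_powerset M))
  | @insert C 𝒞 hCnot ih =>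
    intro M hmem hdisj
    have hC2 := hmem C (mem_insert_self C 𝒞)
    have hrest : ∀ C' ∈ 𝒞, C'.Nonempty ∧ C'.card ≤ 2 ∧ C' ⊆ M \ C := by
      intro C' hC'
      obtain ⟨h1, h2, h3⟩ := hmem C' (mem_insert_of_mem hC')
      refine ⟨h1, h2, ?_⟩
      intro x hx
      rw [mem_sdiff]
      refine ⟨h3 hx, ?_⟩
      have hd : Disjoint C C' := hdisj (by simp) (by simp [hC']) (by rintro rfl; exact hCnot hC')
      exact fun hxC => (Finset.disjoint_left.mp hd hxC) hx
    have hdisj' : ((𝒞 : Set (Finset α)).Pairwise fun C C' => Disjoint C C') :=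
      hdisj.mono (fun x hx => by simp [hx])
    have key : (M.powerset.filter (fun t => ∀ C' ∈ insert C 𝒞, ¬ C' ⊆ t)).card =
        (C.powerset.erase C).card *
          ((M \ C).powerset.filter (fun t => ∀ C' ∈ 𝒞, ¬ C' ⊆ t)).card := by
      rw [← Finset.card_product]
      apply Finset.card_nbij' (i := fun t => (t ∩ C, t \ C))
        (j := fun p => p.1 ∪ p.2)
      · intro t ht
        simp only [mem_coe, mem_filter, mem_powerset, mem_product, mem_erase] at ht ⊢
        obtain ⟨htM, hcons⟩ := ht
        have hCn := hcons C (mem_insert_self C 𝒞)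
        refine ⟨⟨?_, inter_subset_right⟩, ?_, ?_⟩
        · intro h; exact hCn (by rw [← h]; exact inter_subset_left)
        · intro x hx; rw [mem_sdiff] at hx ⊢; exact ⟨htM hx.1, hx.2⟩
        · intro C' hC' hsub
          exact hcons C' (mem_insert_of_mem hC') (hsub.trans sdiff_subset)
      · intro p hp
        simp only [mem_coe, mem_filter, mem_powerset, mem_product, mem_erase] at hp ⊢
        obtain ⟨⟨hne, hsubC⟩, hsubM, hcons⟩ := hp
        constructor
        · exact union_subset (hsubC.trans (hmem C (mem_insert_self C 𝒞)).2.2)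
            (hsubM.trans sdiff_subset)
        · intro C' hC'
          rcases mem_insert.mp hC' with rfl | hC'
          · intro hsub
            apply hne
            apply Finset.Subset.antisymm hsubC
            intro x hxC
            rcases mem_union.mp (hsub hxC) with h | h
            · exact h
            · exact absurd (mem_sdiff.mp (hsubM h)).2 (fun a => a hxC)
          · intro hsub
            apply hcons C' hC'
            intro x hxC'
            have hd : Disjoint C C' := hdisj (by simp) (by simp [hC'])
              (by rintro rfl; exact hCnot hC')
            rcases mem_union.mp (hsub hxC') with h | h
            · exact absurd hxC' (Finset.disjoint_left.mp hd (hsubC h))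
            · exact h
      · intro t ht
        simp only [mem_coe, mem_filter, mem_powerset] at ht
        ext x
        simp only [mem_union, mem_inter, mem_sdiff]
        tauto
      · intro p hp
        simp only [mem_coe, mem_filter, mem_powerset, mem_product, mem_erase] at hp
        obtain ⟨⟨hne, hsubC⟩, hsubM, _⟩ := hp
        have h1 : Disjoint p.2 C := by
          rw [Finset.disjoint_left]
          intro x hx
          exact (mem_sdiff.mp (hsubM hx)).2
        ext1
        · simp only
          rw [union_inter_distrib_right, Finset.inter_eq_left.mpr hsubC,
            Finset.disjoint_iff_inter_eq_empty.mp h1, union_empty]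
        · simp only
          rw [union_sdiff_distrib, Finset.sdiff_eq_empty_iff_subset.mpr hsubC,
            empty_union, Finset.sdiff_eq_self_iff_disjoint.mpr h1]
    have hce : (C.powerset.erase C).card = 2 ^ C.card - 1 := by
      rw [Finset.card_erase_of_mem (Finset.mem_powerset_self C), Finset.card_powerset]
    have hMC : (M \ C).card = M.card - C.card := Finset.card_sdiff_of_subset hC2.2.2
    have hCle : C.card ≤ M.card := Finset.card_le_card hC2.2.2
    have ihM := ih (M \ C) hrest hdisj'
    rw [key, hce, Finset.card_insert_of_notMem hCnot]
    have h1 : 1 ≤ C.card := hC2.1.card_pos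
    have h2 : C.card ≤ 2 := hC2.2.1
    calc (2 ^ C.card - 1) * ((M \ C).powerset.filter (fun t => ∀ C' ∈ 𝒞, ¬ C' ⊆ t)).card
          * 4 ^ (𝒞.card + 1)
        = (2 ^ C.card - 1) * 4 *
          (((M \ C).powerset.filter (fun t => ∀ C' ∈ 𝒞, ¬ C' ⊆ t)).card * 4 ^ 𝒞.card) := by ring
      _ ≤ (2 ^ C.card - 1) * 4 * (3 ^ 𝒞.card * 2 ^ (M \ C).card) := Nat.mul_le_mul_left _ ihM
      _ ≤ 3 * 2 ^ C.card * (3 ^ 𝒞.card * 2 ^ (M \ C).card) := by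
          apply Nat.mul_le_mul_right
          interval_cases h : C.card <;> omega
      _ = 3 ^ (𝒞.card + 1) * (2 ^ C.card * 2 ^ (M.card - C.card)) := by rw [hMC]; ring
      _ = 3 ^ (𝒞.card + 1) * 2 ^ M.card := by rw [← pow_add, Nat.add_sub_cancel' hCle]

lemma den_eq {α : Type*} [DecidableEq α] (Lf Bf Ff : Finset α)
    (hBL : Bf ⊆ Lf) (hFB : Ff ⊆ Bf) :
    {S : Set α | S ⊆ ↑Lf ∧ S ∩ ↑Bf = ↑Ff}.ncard = 2 ^ (Lf \ Bf).card := by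
  have himg : {S : Set α | S ⊆ ↑Lf ∧ S ∩ ↑Bf = ↑Ff} =
      (fun t : Finset α => ((Ff ∪ t : Finset α) : Set α)) '' ↑(Lf \ Bf).powerset := by
    ext S
    simp only [Set.mem_setOf_eq, Set.mem_image, Finset.mem_coe, Finset.mem_powerset]
    constructor
    · rintro ⟨hSL, hSB⟩
      have hSfin : S.Finite := Lf.finite_toSet.subset hSL
      refine ⟨hSfin.toFinset \ Bf, ?_, ?_⟩
      · intro x hx
        rw [Finset.mem_sdiff] at hx ⊢
        obtain ⟨hx1, hx2⟩ := hx
        rw [Set.Finite.mem_toFinset] at hx1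
        exact ⟨by exact_mod_cast hSL hx1, hx2⟩
      · rw [Finset.coe_union, Finset.coe_sdiff, Set.Finite.coe_toFinset]
        ext x
        simp only [Set.mem_union, Set.mem_diff, Finset.mem_coe]
        constructor
        · rintro (hx | ⟨hx, _⟩)
          · have hx' : x ∈ S ∩ (↑Bf : Set α) := by rw [hSB]; exact Finset.mem_coe.mpr hx
            exact hx'.1
          · exact hx
        · intro hx
          by_cases hxB : x ∈ Bf
          · left
            have hx' : x ∈ S ∩ (↑Bf : Set α) := ⟨hx, Finset.mem_coe.mpr hxB⟩
            rw [hSB] at hx'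
            exact Finset.mem_coe.mp hx'
          · right; exact ⟨hx, hxB⟩
    · rintro ⟨t, ht, rfl⟩
      constructor
      · exact Finset.coe_subset.mpr (Finset.union_subset (hFB.trans hBL)
          (ht.trans Finset.sdiff_subset))
      · ext x
        simp only [Finset.coe_union, Set.mem_inter_iff, Set.mem_union, Finset.mem_coe]
        constructor
        · rintro ⟨hx1 | hx1, hx2⟩
          · exact hx1
          · exact absurd hx2 (Finset.mem_sdiff.mp (ht hx1)).2
        · intro hx
          exact ⟨Or.inl hx, hFB hx⟩
  rw [himg, Set.ncard_image_of_injOn, Set.ncard_coe_finset, Finset.card_powerset]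
  intro t ht t' ht' heq
  simp only [Finset.mem_coe, Finset.mem_powerset] at ht ht'
  have heq' : Ff ∪ t = Ff ∪ t' := Finset.coe_injective heq
  have key : ∀ s : Finset α, s ⊆ Lf \ Bf → (Ff ∪ s) \ Bf = s := by
    intro s hs
    ext x
    simp only [Finset.mem_sdiff, Finset.mem_union]
    constructor
    · rintro ⟨hx1 | hx1, hx2⟩
      · exact absurd (hFB hx1) hx2
      · exact hx1
    · intro hx
      exact ⟨Or.inr hx, (Finset.mem_sdiff.mp (hs hx)).2⟩
  rw [← key t ht, ← key t' ht', heq']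

end Aux


theorem stmt16 {D : ℕ} (P : Set (Pt D)) (hP : IsLatticePolytope P)
    (n : ℕ) (r : ℝ) (hr : 0 < r) (F : Set (Pt D))
    (hF : F ⊆ ballFringe ((n : ℝ) • P) r) (l : ℕ)
    (hl : (ballFringe ((n : ℝ) • P) r \ F).ncard = l)
    (k : Pt D) (hk : k ∈ middlePts ((n : ℝ) • P - (n : ℝ) • P) r) :
    (({S : Set (Pt D) | S ⊆ latticePts ((n : ℝ) • P) ∧
        S ∩ ballFringe ((n : ℝ) • P) r = F ∧ k ∉ S - S}).ncard : ℝ) /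
      (({S : Set (Pt D) | S ⊆ latticePts ((n : ℝ) • P) ∧
        S ∩ ballFringe ((n : ℝ) • P) r = F}).ncard : ℝ) ≤
      ((3 : ℝ) / 4) ^
        (((latticePts ((n : ℝ) • P ∩ ((n : ℝ) • P - ({k} : Set (Pt D))))).ncard : ℝ) / 2
          - (l : ℝ)) := by
  classical
  have hQbdd : Bornology.IsBounded ((n : ℝ) • P) := by
    obtain ⟨⟨V, hVfin, hPV⟩, -⟩ := hP
    have hPb : Bornology.IsBounded P := by
      rw [hPV]; exact isBounded_convexHull.mpr hVfin.isBounded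
    exact hPb.smul₀ (n : ℝ)
  set Q : Set (Pt D) := (n : ℝ) • P with hQdef
  have hLfin : (latticePts Q).Finite := latticePts_finite hQbdd
  set Lset : Set (Pt D) := latticePts Q with hLdef
  set Bset : Set (Pt D) := ballFringe Q r with hBdef
  have hBL : Bset ⊆ Lset := fun q hq => hq.1
  have hBfin : Bset.Finite := hLfin.subset hBL
  have hFfin : F.Finite := hBfin.subset hF
  set Lf := hLfin.toFinset with hLfdef
  set Bf := hBfin.toFinset with hBfdef
  set Ff := hFfin.toFinset with hFfdef
  set Mf := Lf \ Bf with hMfdef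
  have hLcoe : (↑Lf : Set (Pt D)) = Lset := hLfin.coe_toFinset
  have hBcoe : (↑Bf : Set (Pt D)) = Bset := hBfin.coe_toFinset
  have hFcoe : (↑Ff : Set (Pt D)) = F := hFfin.coe_toFinset
  have hMcoe : (↑Mf : Set (Pt D)) = Lset \ Bset := by
    rw [hMfdef, Finset.coe_sdiff, hLcoe, hBcoe]
  have hBLf : Bf ⊆ Lf := by
    intro x hx
    rw [hBfdef, Set.Finite.mem_toFinset] at hx
    rw [hLfdef, Set.Finite.mem_toFinset]
    exact hBL hx
  have hFBf : Ff ⊆ Bf := by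
    intro x hx
    rw [hFfdef, Set.Finite.mem_toFinset] at hx
    rw [hBfdef, Set.Finite.mem_toFinset]
    exact hF hx
  -- the denominator
  have hden : ({S : Set (Pt D) | S ⊆ Lset ∧ S ∩ Bset = F}).ncard = 2 ^ Mf.card := by
    rw [← hLcoe, ← hBcoe, ← hFcoe]
    exact den_eq Lf Bf Ff hBLf hFBf
  -- basic facts about k
  have hk' : k ∈ latticePts (Q - Q) := hk.1
  have hkint : ∀ i, ∃ z : ℤ, k i = (z : ℝ) := hk'.2
  -- the set X
  set Xset : Set (Pt D) := {x | x ∈ Lset ∧ x + k ∈ Lset} with hXdef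
  have hXsub : Xset ⊆ Lset := fun x hx => hx.1
  have hXfin : Xset.Finite := hLfin.subset hXsub
  have hXeq : latticePts (Q ∩ (Q - ({k} : Set (Pt D)))) = Xset := by
    ext x
    simp only [hXdef, latticePts, Set.mem_setOf_eq, Set.mem_inter_iff, hLdef]
    have hmem : x ∈ Q - ({k} : Set (Pt D)) ↔ x + k ∈ Q := by
      simp only [Set.sub_singleton, Set.mem_image]
      constructor
      · rintro ⟨y, hy, rfl⟩
        rwa [sub_add_cancel]
      · intro h
        exact ⟨x + k, h, by rw [add_sub_cancel_right]⟩
    constructor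
    · rintro ⟨⟨hxQ, hxkQ⟩, hint⟩
      refine ⟨⟨hxQ, hint⟩, hmem.mp hxkQ, ?_⟩
      intro i
      obtain ⟨z1, hz1⟩ := hint i
      obtain ⟨z2, hz2⟩ := hkint i
      exact ⟨z1 + z2, by rw [PiLp.add_apply, hz1, hz2, Int.cast_add]⟩
    · rintro ⟨⟨hxQ, hint⟩, hxkQ, -⟩
      exact ⟨⟨hxQ, hmem.mpr hxkQ⟩, hint⟩
  -- numerator emptiness helper
  have hnumempty : (∃ x, x ∈ F ∧ x + k ∈ F) →
      {S : Set (Pt D) | S ⊆ Lset ∧ S ∩ Bset = F ∧ k ∉ S - S} = ∅ := by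
    rintro ⟨x, hx1, hx2⟩
    ext S
    simp only [Set.mem_setOf_eq, Set.mem_empty_iff_false, iff_false]
    rintro ⟨hSL, hSB, hknot⟩
    have hFS : F ⊆ S := by rw [← hSB]; exact Set.inter_subset_left
    apply hknot
    have heq : (x + k) - x = k := add_sub_cancel_left x k
    rw [← heq]
    exact Set.sub_mem_sub (hFS hx2) (hFS hx1)
  have hrhs_pos : (0:ℝ) < ((3 : ℝ) / 4) ^
      (((latticePts (Q ∩ (Q - ({k} : Set (Pt D))))).ncard : ℝ) / 2 - (l : ℝ)) :=
    Real.rpow_pos_of_pos (by norm_num) _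
  by_cases hbad : ∃ x, x ∈ F ∧ x + k ∈ F
  · rw [hnumempty hbad, Set.ncard_empty, Nat.cast_zero, zero_div]
    exact le_of_lt hrhs_pos
  push_neg at hbad
  have h2m : (0:ℝ) < 2 ^ Mf.card := by positivity
  by_cases hkz : k = 0
  · -- k = 0 case
    subst hkz
    have hFempty : F = ∅ := by
      ext x
      simp only [Set.mem_empty_iff_false, iff_false]
      intro hx
      exact hbad x hx (by rwa [add_zero])
    have hnum1 : ({S : Set (Pt D) | S ⊆ Lset ∧ S ∩ Bset = F ∧ (0 : Pt D) ∉ S - S}).ncard ≤ 1 := by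
      have hsub : {S : Set (Pt D) | S ⊆ Lset ∧ S ∩ Bset = F ∧ (0 : Pt D) ∉ S - S} ⊆
          {(∅ : Set (Pt D))} := by
        rintro S ⟨hSL, hSB, hknot⟩
        simp only [Set.mem_singleton_iff]
        by_contra hne
        obtain ⟨a, ha⟩ := Set.nonempty_iff_ne_empty.mpr hne
        apply hknot
        have : a - a = (0 : Pt D) := sub_self a
        rw [← this]
        exact Set.sub_mem_sub ha ha
      calc _ ≤ ({(∅ : Set (Pt D))} : Set (Set (Pt D))).ncard :=
            Set.ncard_le_ncard hsub (Set.finite_singleton _)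
        _ = 1 := Set.ncard_singleton _
    have hlB : l = Bf.card := by
      rw [← hl, hFempty, Set.diff_empty, ← hBcoe, Set.ncard_coe_finset]
    have hXall : (latticePts (Q ∩ (Q - ({(0 : Pt D)} : Set (Pt D))))).ncard = Lf.card := by
      have hQ0 : Q - ({(0 : Pt D)} : Set (Pt D)) = Q := by
        ext x
        simp only [Set.sub_singleton, Set.mem_image, sub_zero, exists_eq_right]
      rw [hQ0, Set.inter_self]
      show Lset.ncard = Lf.card
      rw [← hLcoe, Set.ncard_coe_finset]
    have hLcard : Lf.card = Bf.card + Mf.card := by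
      have h1 : Mf.card = Lf.card - Bf.card := Finset.card_sdiff_of_subset hBLf
      have h2 : Bf.card ≤ Lf.card := Finset.card_le_card hBLf
      omega
    rw [hden, hXall, hlB]
    have hnum1' : (({S : Set (Pt D) | S ⊆ Lset ∧ S ∩ Bset = F ∧ (0 : Pt D) ∉ S - S}).ncard : ℝ) ≤ 1 := by
      exact_mod_cast hnum1
    have hc1 : ((1:ℝ)/2) ≤ ((3:ℝ)/4) ^ ((1:ℝ)/2) := by
      rw [← Real.sqrt_eq_rpow]
      rw [show (1:ℝ)/2 = Real.sqrt ((1:ℝ)/4) from by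
        rw [show (1:ℝ)/4 = ((1:ℝ)/2)^2 by norm_num, Real.sqrt_sq (by norm_num)]]
      exact Real.sqrt_le_sqrt (by norm_num)
    have hc2 : ((3:ℝ)/4) ^ ((Mf.card : ℝ)/2) = (((3:ℝ)/4) ^ ((1:ℝ)/2)) ^ (Mf.card : ℕ) := by
      rw [← Real.rpow_natCast (((3:ℝ)/4) ^ ((1:ℝ)/2)) Mf.card, ← Real.rpow_mul (by norm_num)]
      ring_nf
    have hc3 : ((1:ℝ)/2) ^ (Mf.card : ℕ) ≤ ((3:ℝ)/4) ^ ((Mf.card : ℝ)/2) := by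
      rw [hc2]
      exact pow_le_pow_left₀ (by norm_num) hc1 Mf.card
    have hc4 : ((3:ℝ)/4) ^ ((Mf.card : ℝ)/2) ≤
        ((3:ℝ)/4) ^ ((Lf.card : ℝ)/2 - (Bf.card : ℝ)) := by
      apply Real.rpow_le_rpow_of_exponent_ge (by norm_num) (by norm_num)
      rw [hLcard]
      push_cast
      have : (0:ℝ) ≤ Bf.card := Nat.cast_nonneg _
      linarith
    have h2m' : (0:ℝ) < ((2 ^ Mf.card : ℕ) : ℝ) := by positivity
    calc (({S : Set (Pt D) | S ⊆ Lset ∧ S ∩ Bset = F ∧ (0 : Pt D) ∉ S - S}).ncard : ℝ) /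
          ((2 ^ Mf.card : ℕ) : ℝ)
        ≤ 1 / ((2 ^ Mf.card : ℕ) : ℝ) := (div_le_div_iff_of_pos_right h2m').mpr hnum1'
      _ = ((1:ℝ)/2) ^ (Mf.card : ℕ) := by
          push_cast
          rw [div_pow, one_pow]
      _ ≤ ((3:ℝ)/4) ^ ((Mf.card : ℝ)/2) := hc3
      _ ≤ _ := hc4
  -- main case : k ≠ 0
  have hsmulinj : ∀ a b : ℝ, a • k = b • k → a = b := by
    intro a b hab
    by_contra hne
    apply hkz
    have h0 : (a - b) • k = 0 := by rw [sub_smul, hab, sub_self]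
    rcases smul_eq_zero.mp h0 with h | h
    · exact absurd (sub_eq_zero.mp h) hne
    · exact h
  have hgaps : ∀ x : Pt D, ∃ i : ℕ, x - ((i : ℝ) + 1) • k ∉ Xset := by
    intro x
    by_contra hcon
    push_neg at hcon
    have hinj : Function.Injective (fun i : ℕ => x - ((i : ℝ) + 1) • k) := by
      intro i j hij
      simp only at hij
      rw [sub_right_inj] at hij
      have := hsmulinj _ _ hij
      exact_mod_cast (by linarith : (i : ℝ) = (j : ℝ))
    exact absurd (Set.infinite_of_injective_forall_mem hinj hcon) hXfin.not_infinite
  set jf : Pt D → ℕ := fun x => Nat.find (hgaps x) with hjfdef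
  have hjspec : ∀ x, x - ((jf x : ℝ) + 1) • k ∉ Xset := fun x => Nat.find_spec (hgaps x)
  have hjmin : ∀ x, ∀ m : ℕ, m < jf x → x - ((m : ℝ) + 1) • k ∈ Xset := by
    intro x m hm
    exact not_not.mp (Nat.find_min (hgaps x) hm)
  have hjsucc : ∀ x ∈ Xset, jf (x + k) = jf x + 1 := by
    intro x hx
    show Nat.find (hgaps (x + k)) = jf x + 1
    rw [Nat.find_eq_iff]
    constructor
    · have heq : (x + k) - ((↑(jf x + 1) : ℝ) + 1) • k = x - ((jf x : ℝ) + 1) • k := by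
        push_cast
        module
      rw [heq]
      exact hjspec x
    · intro m hm
      rw [not_not]
      match m, hm with
      | 0, _ =>
        have heq : (x + k) - (((0:ℕ) : ℝ) + 1) • k = x := by push_cast; module
        rw [heq]; exact hx
      | (m' + 1), hm =>
        have heq : (x + k) - ((↑(m' + 1) : ℝ) + 1) • k = x - ((m' : ℝ) + 1) • k := by
          push_cast; module
        rw [heq]
        exact hjmin x m' (by omega)
  have hstep : ∀ x, x - k ∈ Xset → jf x = jf (x - k) + 1 := by
    intro x hx
    have := hjsucc (x - k) hx
    rwa [sub_add_cancel] at this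
  set Matf := hXfin.toFinset.filter (fun x => Even (jf x)) with hMatdef
  have hMatmem : ∀ x, x ∈ Matf ↔ x ∈ Xset ∧ Even (jf x) := by
    intro x; rw [hMatdef, Finset.mem_filter, Set.Finite.mem_toFinset]
  have hXMat : hXfin.toFinset.card ≤ 2 * Matf.card := by
    have hsplit := Finset.card_filter_add_card_filter_not
      (s := hXfin.toFinset) (p := fun x => Even (jf x))
    rw [← hMatdef] at hsplit
    have hinj2 : (hXfin.toFinset.filter (fun x => ¬ Even (jf x))).card ≤ Matf.card := by
      apply Finset.card_le_card_of_injOn (fun x => x - k)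
      · intro x hx
        rw [Finset.mem_coe, Finset.mem_filter, Set.Finite.mem_toFinset] at hx
        obtain ⟨hxX, hodd⟩ := hx
        have hj1 : 0 < jf x := Nat.pos_of_ne_zero (fun h0 => hodd (by rw [h0]; exact ⟨0, rfl⟩))
        have hxk : x - k ∈ Xset := by
          have h5 := hjmin x 0 hj1
          have heq : x - (((0:ℕ):ℝ) + 1) • k = x - k := by push_cast; module
          rwa [heq] at h5
        rw [Finset.mem_coe, hMatmem]
        refine ⟨hxk, ?_⟩
        have hjeq := hstep x hxk
        by_contra hodd2
        exact hodd (by rw [hjeq]; exact Nat.even_add_one.mpr hodd2)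
      · intro a _ b _ hab
        exact sub_left_injective hab
    omega
  have hmatX : ∀ x ∈ Matf, x ∈ Xset ∧ Even (jf x) := fun x hx => (hMatmem x).mp hx
  have hdisjE : ∀ x ∈ Matf, ∀ x' ∈ Matf, x ≠ x' →
      x ≠ x' + k ∧ x + k ≠ x' ∧ x + k ≠ x' + k := by
    intro x hx x' hx' hne
    obtain ⟨hxX, hxE⟩ := hmatX x hx
    obtain ⟨hx'X, hx'E⟩ := hmatX x' hx'
    refine ⟨?_, ?_, fun h => hne (add_right_cancel h)⟩
    · intro h
      have hj := hjsucc x' hx'X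
      rw [← h] at hj
      rw [hj] at hxE
      exact (Nat.even_add_one.mp hxE) hx'E
    · intro h
      have hj := hjsucc x hxX
      rw [h] at hj
      rw [hj] at hx'E
      exact (Nat.even_add_one.mp hx'E) hxE
  have hBFcard : (Bf \ Ff).card = l := by
    have hcoe : (↑(Bf \ Ff) : Set (Pt D)) = Bset \ F := by
      rw [Finset.coe_sdiff, hBcoe, hFcoe]
    rw [← hl, ← hcoe, Set.ncard_coe_finset]
  set M'f := Matf.filter (fun x => x ∉ Bset \ F ∧ x + k ∉ Bset \ F) with hM'def
  have hM'mem : ∀ x, x ∈ M'f ↔ x ∈ Matf ∧ x ∉ Bset \ F ∧ x + k ∉ Bset \ F := by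
    intro x; rw [hM'def, Finset.mem_filter]
  have hM'Mat : M'f ⊆ Matf := Finset.filter_subset _ _
  have hMatM' : Matf.card ≤ M'f.card + l := by
    have hsplit := Finset.card_filter_add_card_filter_not
      (s := Matf) (p := fun x => x ∉ Bset \ F ∧ x + k ∉ Bset \ F)
    rw [← hM'def] at hsplit
    have hinj3 : (Matf.filter (fun x => ¬(x ∉ Bset \ F ∧ x + k ∉ Bset \ F))).card ≤
        (Bf \ Ff).card := by
      apply Finset.card_le_card_of_injOn (fun x => if x ∈ Bset \ F then x else x + k)
      · intro x hx
        rw [Finset.mem_coe, Finset.mem_filter] at hx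
        obtain ⟨hxM, hcond⟩ := hx
        push_neg at hcond
        have hgoal : ∀ y : Pt D, y ∈ Bset \ F → y ∈ Bf \ Ff := by
          intro y hy
          rw [Finset.mem_sdiff, hBfdef, hFfdef, Set.Finite.mem_toFinset,
            Set.Finite.mem_toFinset]
          exact ⟨hy.1, hy.2⟩
        by_cases hc : x ∈ Bset \ F
        · dsimp only; rw [if_pos hc]; exact hgoal x hc
        · dsimp only; rw [if_neg hc]; exact hgoal _ (hcond hc)
      · intro a ha b hb hab
        simp only at hab
        rw [Finset.mem_coe, Finset.mem_filter] at ha hb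
        by_contra hne
        obtain ⟨h1, h2, h3⟩ := hdisjE a ha.1 b hb.1 hne
        by_cases hca : a ∈ Bset \ F
        · rw [if_pos hca] at hab
          by_cases hcb : b ∈ Bset \ F
          · rw [if_pos hcb] at hab; exact hne hab
          · rw [if_neg hcb] at hab; exact h1 hab
        · rw [if_neg hca] at hab
          by_cases hcb : b ∈ Bset \ F
          · rw [if_pos hcb] at hab; exact h2 hab
          · rw [if_neg hcb] at hab; exact h3 hab
    omega
  have hend : ∀ x ∈ M'f, (x ∈ F ∨ x ∈ (↑Mf : Set (Pt D))) ∧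
      (x + k ∈ F ∨ x + k ∈ (↑Mf : Set (Pt D))) := by
    intro x hx
    obtain ⟨hxMat, hc1, hc2⟩ := (hM'mem x).mp hx
    obtain ⟨hxX, -⟩ := hmatX x hxMat
    have hxL : x ∈ Lset := hxX.1
    have hxkL : x + k ∈ Lset := hxX.2
    rw [hMcoe]
    constructor
    · by_cases hB : x ∈ Bset
      · left; by_contra hF'; exact hc1 ⟨hB, hF'⟩
      · right; exact ⟨hxL, hB⟩
    · by_cases hB : x + k ∈ Bset
      · left; by_contra hF'; exact hc2 ⟨hB, hF'⟩
      · right; exact ⟨hxkL, hB⟩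
  set Cfun : Pt D → Finset (Pt D) := fun x => ({x, x + k} : Finset (Pt D)) ∩ Mf with hCfun
  have hCne : ∀ x ∈ M'f, (Cfun x).Nonempty := by
    intro x hx
    obtain ⟨h1, h2⟩ := hend x hx
    rcases h1 with h1 | h1
    · rcases h2 with h2 | h2
      · exact absurd h2 (hbad x h1)
      · exact ⟨x + k, Finset.mem_inter.mpr ⟨by simp, Finset.mem_coe.mp h2⟩⟩
    · exact ⟨x, Finset.mem_inter.mpr ⟨by simp, Finset.mem_coe.mp h1⟩⟩
  have hCdisj2 : ∀ x ∈ M'f, ∀ x' ∈ M'f, x ≠ x' → Disjoint (Cfun x) (Cfun x') := by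
    intro x hx x' hx' hne
    obtain ⟨h1, h2, h3⟩ := hdisjE x (hM'Mat hx) x' (hM'Mat hx') hne
    rw [Finset.disjoint_left]
    intro y hy hy'
    have hy1 := (Finset.mem_inter.mp hy).1
    have hy2 := (Finset.mem_inter.mp hy').1
    simp only [Finset.mem_insert, Finset.mem_singleton] at hy1 hy2
    rcases hy1 with rfl | rfl
    · rcases hy2 with h | h
      · exact hne h
      · exact h1 h
    · rcases hy2 with h | h
      · exact h2 h
      · exact h3 h
  set Csetf := M'f.image Cfun with hCsetdef
  have hCinj : Set.InjOn Cfun ↑M'f := by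
    intro x hx x' hx' heq
    by_contra hne
    have hd := hCdisj2 x (Finset.mem_coe.mp hx) x' (Finset.mem_coe.mp hx') hne
    rw [heq] at hd
    obtain ⟨y, hy⟩ := hCne x' (Finset.mem_coe.mp hx')
    exact Finset.disjoint_left.mp hd hy hy
  have hCcard : Csetf.card = M'f.card := Finset.card_image_of_injOn hCinj
  have hCprops : ∀ C ∈ Csetf, C.Nonempty ∧ C.card ≤ 2 ∧ C ⊆ Mf := by
    intro C hC
    obtain ⟨x, hx, rfl⟩ := Finset.mem_image.mp hC
    refine ⟨hCne x hx, ?_, Finset.inter_subset_right⟩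
    calc (Cfun x).card ≤ ({x, x + k} : Finset (Pt D)).card :=
          Finset.card_le_card Finset.inter_subset_left
      _ ≤ 2 := (Finset.card_insert_le _ _).trans (by simp)
  have hCpair : (↑Csetf : Set (Finset (Pt D))).Pairwise (fun C C' => Disjoint C C') := by
    intro C hC C' hC' hne
    rw [Finset.mem_coe] at hC hC'
    obtain ⟨x, hx, rfl⟩ := Finset.mem_image.mp hC
    obtain ⟨x', hx', rfl⟩ := Finset.mem_image.mp hC'
    exact hCdisj2 x hx x' hx' (fun h => hne (by rw [h]))
  set goodf := Mf.powerset.filter (fun t => ∀ C ∈ Csetf, ¬ C ⊆ t) with hgooddef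
  have hrecon : ∀ S : Set (Pt D), S ⊆ Lset → S ∩ Bset = F →
      S = F ∪ (S ∩ (↑Mf : Set (Pt D))) := by
    intro S hSL hSB
    ext x
    constructor
    · intro hx
      by_cases hB : x ∈ Bset
      · left
        rw [← hSB]; exact ⟨hx, hB⟩
      · right
        exact ⟨hx, by rw [hMcoe]; exact ⟨hSL hx, hB⟩⟩
    · rintro (hx | hx)
      · have h7 : x ∈ S ∩ Bset := by rw [hSB]; exact hx
        exact h7.1
      · exact hx.1
  have hNumInj : Set.InjOn (fun S : Set (Pt D) => S ∩ (↑Mf : Set (Pt D)))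
      {S : Set (Pt D) | S ⊆ Lset ∧ S ∩ Bset = F ∧ k ∉ S - S} := by
    intro S hS S' hS' heq
    simp only at heq
    simp only [Set.mem_setOf_eq] at hS hS'
    calc S = F ∪ (S ∩ (↑Mf : Set (Pt D))) := hrecon S hS.1 hS.2.1
      _ = F ∪ (S' ∩ (↑Mf : Set (Pt D))) := by rw [heq]
      _ = S' := (hrecon S' hS'.1 hS'.2.1).symm
  have hNumImg : (fun S : Set (Pt D) => S ∩ (↑Mf : Set (Pt D))) ''
      {S : Set (Pt D) | S ⊆ Lset ∧ S ∩ Bset = F ∧ k ∉ S - S} ⊆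
      (fun t : Finset (Pt D) => (↑t : Set (Pt D))) '' ↑goodf := by
    rintro T ⟨S, hS, rfl⟩
    obtain ⟨hSL, hSB, hknot⟩ := hS
    have hTfin : (S ∩ (↑Mf : Set (Pt D))).Finite :=
      Mf.finite_toSet.subset Set.inter_subset_right
    refine ⟨hTfin.toFinset, ?_, hTfin.coe_toFinset⟩
    rw [Finset.mem_coe, hgooddef, Finset.mem_filter, Finset.mem_powerset]
    constructor
    · intro y hy
      rw [Set.Finite.mem_toFinset] at hy
      exact Finset.mem_coe.mp hy.2
    · intro C hC hsub
      obtain ⟨x, hxM', rfl⟩ := Finset.mem_image.mp hC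
      apply hknot
      have hsub' : ∀ y : Pt D, y ∈ Cfun x → y ∈ S := by
        intro y hy
        have h6 := hsub hy
        rw [Set.Finite.mem_toFinset] at h6
        exact h6.1
      have hFS : F ⊆ S := by rw [← hSB]; exact Set.inter_subset_left
      have hxS : x ∈ S := by
        rcases (hend x hxM').1 with h | h
        · exact hFS h
        · exact hsub' x (Finset.mem_inter.mpr ⟨by simp, Finset.mem_coe.mp h⟩)
      have hxkS : x + k ∈ S := by
        rcases (hend x hxM').2 with h | h
        · exact hFS h
        · exact hsub' (x + k) (Finset.mem_inter.mpr ⟨by simp, Finset.mem_coe.mp h⟩)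
      rw [← add_sub_cancel_left x k]
      exact Set.sub_mem_sub hxkS hxS
  have hNumCard : ({S : Set (Pt D) | S ⊆ Lset ∧ S ∩ Bset = F ∧ k ∉ S - S}).ncard ≤
      goodf.card := by
    calc ({S : Set (Pt D) | S ⊆ Lset ∧ S ∩ Bset = F ∧ k ∉ S - S}).ncard
        = ((fun S : Set (Pt D) => S ∩ (↑Mf : Set (Pt D))) ''
            {S : Set (Pt D) | S ⊆ Lset ∧ S ∩ Bset = F ∧ k ∉ S - S}).ncard :=
          (Set.ncard_image_of_injOn hNumInj).symm
      _ ≤ ((fun t : Finset (Pt D) => (↑t : Set (Pt D))) '' ↑goodf).ncard :=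
          Set.ncard_le_ncard hNumImg (goodf.finite_toSet.image _)
      _ ≤ (↑goodf : Set (Finset (Pt D))).ncard := Set.ncard_image_le goodf.finite_toSet
      _ = goodf.card := Set.ncard_coe_finset goodf
  have hcount := count_lemma Csetf Mf hCprops hCpair
  have hXcardeq : (latticePts (Q ∩ (Q - ({k} : Set (Pt D))))).ncard = hXfin.toFinset.card := by
    rw [hXeq, ← Set.ncard_coe_finset, Set.Finite.coe_toFinset]
  have hexple : ((latticePts (Q ∩ (Q - ({k} : Set (Pt D))))).ncard : ℝ) / 2 - (l : ℝ) ≤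
      (Csetf.card : ℝ) := by
    rw [hXcardeq, hCcard]
    have h1 : (hXfin.toFinset.card : ℝ) ≤ 2 * (Matf.card : ℝ) := by exact_mod_cast hXMat
    have h2 : (Matf.card : ℝ) ≤ (M'f.card : ℝ) + (l : ℝ) := by exact_mod_cast hMatM'
    linarith
  rw [hden]
  have hnumle : (({S : Set (Pt D) | S ⊆ Lset ∧ S ∩ Bset = F ∧ k ∉ S - S}).ncard : ℝ) ≤
      (goodf.card : ℝ) := by exact_mod_cast hNumCard
  have hgf : (goodf.card : ℝ) ≤ ((3:ℝ)/4) ^ (Csetf.card : ℕ) * 2 ^ Mf.card := by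
    have h4 : (0:ℝ) < 4 ^ Csetf.card := by positivity
    have h5 : ((goodf.card : ℝ)) * 4 ^ Csetf.card ≤ 3 ^ Csetf.card * 2 ^ Mf.card := by
      exact_mod_cast hcount
    rw [div_pow, div_mul_eq_mul_div, le_div_iff₀ h4]
    linarith
  have h2m' : (0:ℝ) < ((2 ^ Mf.card : ℕ) : ℝ) := by positivity
  calc (({S : Set (Pt D) | S ⊆ Lset ∧ S ∩ Bset = F ∧ k ∉ S - S}).ncard : ℝ) /
        ((2 ^ Mf.card : ℕ) : ℝ)
      ≤ (((3:ℝ)/4) ^ (Csetf.card : ℕ) * 2 ^ Mf.card) / ((2 ^ Mf.card : ℕ) : ℝ) :=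
        (div_le_div_iff_of_pos_right h2m').mpr (hnumle.trans hgf)
    _ = ((3:ℝ)/4) ^ (Csetf.card : ℕ) := by
        push_cast
        rw [mul_div_assoc, div_self (ne_of_gt (by positivity : (0:ℝ) < (2:ℝ) ^ Mf.card)), mul_one]
    _ = ((3:ℝ)/4) ^ ((Csetf.card : ℕ) : ℝ) := (Real.rpow_natCast _ _).symm
    _ ≤ _ := Real.rpow_le_rpow_of_exponent_ge (by norm_num) (by norm_num) hexple


end
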